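/- Let f : A → B be a definable map between definable sets in an o-minimal structure, and Sp(f) : Sp(A) → Sp(B) the induced map on spectra. Then f is an open map if and only if Sp(f) is open, and f is definably closed (images of definable closed sets are closed) if and only if Sp(f) is a closed map. -/

import Mathlib

open FirstOrder Set Classical

/-- `Defin L M s` : the set `s ⊆ Mᵏ` is definable in the structure `M` with parameters from `M`. -/
def Defin (L : FirstOrder.Language) (M : Type) [L.Structure M] {k : ℕ}
    (s : Set (Fin k → M)) : Prop :=
  Set.Definable (Set.univ : Set M) L s

/-- `M` is an o-minimal structure: the order is definable, and every definable subset of `M`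
is a finite union of points and open intervals (possibly unbounded). -/
def IsOMin (L : FirstOrder.Language) (M : Type) [L.Structure M] [LinearOrder M] : Prop :=
  Set.Definable (Set.univ : Set M) L {p : Fin 2 → M | p 0 < p 1} ∧
  ∀ s : Set (Fin 1 → M), Defin L M s →
    ∃ (F : Finset M) (n : ℕ) (J : Fin n → Set M),
      (∀ i, (∃ a b, J i = Set.Ioo a b) ∨ (∃ a, J i = Set.Ioi a) ∨
            (∃ b, J i = Set.Iio b) ∨ J i = Set.univ) ∧
      (fun p : Fin 1 → M => p 0) '' s = ↑F ∪ ⋃ i, J i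

/-- `M` expands an ordered group: the graph of addition is definable. -/
def ExpandsGroup (L : FirstOrder.Language) (M : Type) [L.Structure M] [Add M] : Prop :=
  Set.Definable (Set.univ : Set M) L {p : Fin 3 → M | p 0 + p 1 = p 2}

/-- `M` expands a (real closed, by o-minimality) field: graphs of `+` and `*` are definable. -/
def ExpandsField (L : FirstOrder.Language) (M : Type) [L.Structure M] [Add M] [Mul M] : Prop :=
  Set.Definable (Set.univ : Set M) L {p : Fin 3 → M | p 0 + p 1 = p 2} ∧
  Set.Definable (Set.univ : Set M) L {p : Fin 3 → M | p 0 * p 1 = p 2}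

/-- o-minimal dimension of a subset of `Mᵏ` : the largest `d` such that some coordinate
projection onto `M^d` has nonempty interior; `-1` for the empty set. -/

noncomputable def odim {M : Type} [TopologicalSpace M] {k : ℕ} (s : Set (Fin k → M)) : ℤ :=
  if s.Nonempty then
    ((sSup {d : ℕ | ∃ f : Fin d → Fin k, Function.Injective f ∧
      (interior ((fun x : Fin k → M => x ∘ f) '' s)).Nonempty} : ℕ) : ℤ)
  else -1

/-- A point of the o-minimal spectrum `Sp A`: a complete type over `M` concentrated on `A`,
presented as an ultrafilter on the Boolean algebra of definable subsets of `A`. -/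
structure OType (L : FirstOrder.Language) (M : Type) [L.Structure M] {k : ℕ}
    (A : Set (Fin k → M)) where
  sets : Set (Set (Fin k → M))
  definable_mem : ∀ s ∈ sets, Defin L M s
  subset_mem : ∀ s ∈ sets, s ⊆ A
  top_mem : A ∈ sets
  nonempty_mem : ∀ s ∈ sets, s.Nonempty
  inter_mem : ∀ s ∈ sets, ∀ t ∈ sets, s ∩ t ∈ sets
  complete : ∀ s : Set (Fin k → M), Defin L M s → s ⊆ A → (s ∈ sets ∨ A \ s ∈ sets)

/-- The spectral topology on `Sp A`, generated by the sets `Sp U` for `U` open definable. -/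
instance OType.topology (L : FirstOrder.Language) (M : Type) [L.Structure M] [TopologicalSpace M]
    {k : ℕ} (A : Set (Fin k → M)) : TopologicalSpace (OType L M A) :=
  TopologicalSpace.generateFrom
    {V | ∃ U : Set (Fin k → M), IsOpen U ∧ Defin L M U ∧
      V = {x : OType L M A | U ∩ A ∈ x.sets}}

/-- The dimension of a type: the minimal dimension of a definable set on which it concentrates. -/
noncomputable def OType.tdim {L : FirstOrder.Language} {M : Type} [L.Structure M]
    [TopologicalSpace M] {k : ℕ} {A : Set (Fin k → M)} (x : OType L M A) : ℤ :=
  sInf {d : ℤ | ∃ s ∈ x.sets, odim s = d}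

/-- `F` is the map `Sp f : Sp A → Sp B` induced by the definable map `f : A → B`
(pushforward of types: `t ∈ Sp f (x)` iff `f⁻¹(t) ∈ x`). -/
def IsSpecMap (L : FirstOrder.Language) (M : Type) [L.Structure M] {k h : ℕ}
    (A : Set (Fin k → M)) (B : Set (Fin h → M)) (f : (Fin k → M) → (Fin h → M))
    (F : OType L M A → OType L M B) : Prop :=
  ∀ (x : OType L M A) (t : Set (Fin h → M)),
    t ∈ (F x).sets ↔ (Defin L M t ∧ t ⊆ B ∧ A ∩ f ⁻¹' t ∈ x.sets)

namespace OMin15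
variable {L : FirstOrder.Language} {M : Type} [L.Structure M]

lemma defin_eq_const {n : ℕ} (j : Fin n) (c : M) : Defin L M {w : Fin n → M | w j = c} := by
  refine ⟨FirstOrder.Language.Term.equal (FirstOrder.Language.Term.var j)
    ((L.con ⟨c, Set.mem_univ c⟩).term), ?_⟩
  ext w
  simp [FirstOrder.Language.Formula.realize_equal]

lemma defin_preim {m n : ℕ} {S : Set (Fin m → M)} (hS : Defin L M S) (g : Fin m → Fin n) :
    Defin L M {w : Fin n → M | w ∘ g ∈ S} :=
  hS.preimage_comp g

lemma defin_lt [LT M] {n : ℕ}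
    (hlt : Set.Definable (Set.univ : Set M) L {p : Fin 2 → M | p 0 < p 1})
    (i j : Fin n) : Defin L M {w : Fin n → M | w i < w j} := by
  have h := defin_preim (L := L) (M := M) hlt ![i, j]
  convert h using 1
  rfl

end OMin15

namespace OMin15
variable {L : FirstOrder.Language} {M : Type} [L.Structure M]

section Group
variable [AddCommGroup M] [LinearOrder M] [IsOrderedAddMonoid M]
  (hlt : Set.Definable (Set.univ : Set M) L {p : Fin 2 → M | p 0 < p 1})
  (hgrp : Set.Definable (Set.univ : Set M) L {p : Fin 3 → M | p 0 + p 1 = p 2})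

include hlt hgrp in
lemma defin_lt_add3 : Defin L M {r : Fin 3 → M | r 0 < r 1 + r 2} := by
  have h4 : Defin L M ({q : Fin 4 → M | q ∘ ![1, 2, 3] ∈ {p : Fin 3 → M | p 0 + p 1 = p 2}}
      ∩ {q : Fin 4 → M | q ∘ ![0, 3] ∈ {p : Fin 2 → M | p 0 < p 1}}) :=
    (defin_preim hgrp _).inter (defin_preim hlt _)
  have h3 := h4.image_comp (Fin.castSucc : Fin 3 → Fin 4)
  unfold Defin
  convert h3 using 1
  ext r
  constructor
  · rintro hr
    refine ⟨![r 0, r 1, r 2, r 1 + r 2], ⟨?_, ?_⟩, ?_⟩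
    · show (r 1 : M) + r 2 = r 1 + r 2; rfl
    · exact hr
    · ext i; fin_cases i <;> rfl
  · rintro ⟨q, ⟨h1, h2⟩, rfl⟩
    have e1 : q 1 + q 2 = q 3 := h1
    have e2 : q 0 < q 3 := h2
    show q (Fin.castSucc 0) < q (Fin.castSucc 1) + q (Fin.castSucc 2)
    have c0 : Fin.castSucc (0 : Fin 3) = (0 : Fin 4) := rfl
    have c1 : Fin.castSucc (1 : Fin 3) = (1 : Fin 4) := rfl
    have c2 : Fin.castSucc (2 : Fin 3) = (2 : Fin 4) := rfl
    rw [c0, c1, c2, e1]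
    exact e2

include hlt hgrp in
lemma defin_lt_add {n : ℕ} (i j l : Fin n) : Defin L M {w : Fin n → M | w i < w j + w l} :=
  defin_preim (defin_lt_add3 hlt hgrp) ![i, j, l]

include hlt in
lemma defin_pos {n : ℕ} (j : Fin n) : Defin L M {w : Fin n → M | 0 < w j} := by
  have h2 : Defin L M ({q : Fin 2 → M | q 0 = 0} ∩ {q : Fin 2 → M | q 0 < q 1}) :=
    (defin_eq_const 0 0).inter (defin_lt hlt 0 1)
  have h1 := h2.image_comp (![1] : Fin 1 → Fin 2)
  have h1' : Defin L M {r : Fin 1 → M | 0 < r 0} := by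
    unfold Defin
    convert h1 using 1
    ext r
    constructor
    · intro hr
      exact ⟨![0, r 0], ⟨rfl, hr⟩, by ext i; fin_cases i <;> rfl⟩
    · rintro ⟨q, ⟨h0, hq⟩, rfl⟩
      have h0' : q 0 = 0 := h0
      have hq' : q 0 < q 1 := hq
      rw [h0'] at hq'
      exact hq'
  exact defin_preim h1' ![j]

end Group
end OMin15

namespace OMin15
variable {L : FirstOrder.Language} {M : Type} [L.Structure M]

section Graph
variable {k h : ℕ} {f : (Fin k → M) → (Fin h → M)}
  (hfdef : Defin L M
      {p : Fin (k + h) → M |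
        f (fun i => p (Fin.castAdd h i)) = fun j => p (Fin.natAdd k j)})

include hfdef in
lemma defin_image {C : Set (Fin k → M)} (hC : Defin L M C) : Defin L M (f '' C) := by
  have hdef : Defin L M ((fun p : Fin (k + h) → M => p ∘ Fin.castAdd h) ⁻¹' C ∩
      {p : Fin (k + h) → M | f (fun i => p (Fin.castAdd h i)) = fun j => p (Fin.natAdd k j)}) :=
    (hC.preimage_comp (Fin.castAdd h)).inter hfdef
  have him := hdef.image_comp (Fin.natAdd k)
  unfold Defin
  convert him using 1
  ext q
  constructor
  · rintro ⟨p, hp, rfl⟩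
    refine ⟨Fin.append p (f p), ⟨?_, ?_⟩, ?_⟩
    · show (Fin.append p (f p)) ∘ Fin.castAdd h ∈ C
      have e : (Fin.append p (f p)) ∘ Fin.castAdd h = p := funext fun i => Fin.append_left _ _ i
      rw [e]; exact hp
    · show f (fun i => Fin.append p (f p) (Fin.castAdd h i)) = _
      have e1 : (fun i => Fin.append p (f p) (Fin.castAdd h i)) = p :=
        funext fun i => Fin.append_left _ _ i
      rw [e1]
      exact funext fun j => (Fin.append_right _ _ j).symm
    · exact funext fun j => Fin.append_right _ _ j
  · rintro ⟨w, ⟨hw1, hw2⟩, rfl⟩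
    refine ⟨w ∘ Fin.castAdd h, hw1, ?_⟩
    have : f (w ∘ Fin.castAdd h) = fun j => w (Fin.natAdd k j) := hw2
    rw [this]
    rfl

include hfdef in
lemma defin_preimage {t : Set (Fin h → M)} (ht : Defin L M t) : Defin L M (f ⁻¹' t) := by
  have hdef : Defin L M ((fun p : Fin (k + h) → M => p ∘ Fin.natAdd k) ⁻¹' t ∩
      {p : Fin (k + h) → M | f (fun i => p (Fin.castAdd h i)) = fun j => p (Fin.natAdd k j)}) :=
    (ht.preimage_comp (Fin.natAdd k)).inter hfdef
  have him := hdef.image_comp (Fin.castAdd h)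
  unfold Defin
  convert him using 1
  ext p
  constructor
  · intro hp
    refine ⟨Fin.append p (f p), ⟨?_, ?_⟩, ?_⟩
    · show Fin.append p (f p) ∘ Fin.natAdd k ∈ t
      have : (Fin.append p (f p)) ∘ Fin.natAdd k = f p := funext fun j => Fin.append_right _ _ j
      rwa [this]
    · show f (fun i => Fin.append p (f p) (Fin.castAdd h i)) = _
      have e1 : (fun i => Fin.append p (f p) (Fin.castAdd h i)) = p :=
        funext fun i => Fin.append_left _ _ i
      rw [e1]
      exact funext fun j => (Fin.append_right _ _ j).symm
    · exact funext fun i => Fin.append_left _ _ i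
  · rintro ⟨w, ⟨hw1, hw2⟩, rfl⟩
    show f (w ∘ Fin.castAdd h) ∈ t
    have : f (w ∘ Fin.castAdd h) = fun j => w (Fin.natAdd k j) := hw2
    rw [this]
    exact hw1

end Graph
end OMin15

namespace OMin15
variable {L : FirstOrder.Language} {M : Type} [L.Structure M]

section Closure
variable [AddCommGroup M] [LinearOrder M] [IsOrderedAddMonoid M]
  (hlt : Set.Definable (Set.univ : Set M) L {p : Fin 2 → M | p 0 < p 1})
  (hgrp : Set.Definable (Set.univ : Set M) L {p : Fin 3 → M | p 0 + p 1 = p 2})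

/-- the open box of radius ε around a -/
def Box {k : ℕ} (a : Fin k → M) (ε : M) : Set (Fin k → M) :=
  {z | ∀ i, a i < z i + ε ∧ z i < a i + ε}

include hlt hgrp in
lemma defin_halfbox {k : ℕ} (i : Fin k) (c ε : M) :
    Defin L M {z : Fin k → M | c < z i + ε} := by
  have hdef : Defin L M ({w : Fin (k + 2) → M | w (Fin.natAdd k 0) = c}
      ∩ ({w : Fin (k + 2) → M | w (Fin.natAdd k 1) = ε}
      ∩ {w : Fin (k + 2) → M | w (Fin.natAdd k 0) < w (Fin.castAdd 2 i) + w (Fin.natAdd k 1)})) :=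
    (defin_eq_const _ c).inter ((defin_eq_const _ ε).inter (defin_lt_add hlt hgrp _ _ _))
  have him := hdef.image_comp (Fin.castAdd 2)
  unfold Defin
  convert him using 1
  ext z
  constructor
  · intro hz
    refine ⟨Fin.append z ![c, ε], ⟨?_, ?_, ?_⟩, ?_⟩
    · exact Fin.append_right _ _ 0
    · exact Fin.append_right _ _ 1
    · show Fin.append z ![c, ε] (Fin.natAdd k 0) < Fin.append z ![c, ε] (Fin.castAdd 2 i)
        + Fin.append z ![c, ε] (Fin.natAdd k 1)
      rw [Fin.append_right, Fin.append_right, Fin.append_left]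
      exact hz
    · exact funext fun j => Fin.append_left _ _ j
  · rintro ⟨w, ⟨h1, h2, h3⟩, rfl⟩
    show c < w (Fin.castAdd 2 i) + ε
    have h1' : w (Fin.natAdd k 0) = c := h1
    have h2' : w (Fin.natAdd k 1) = ε := h2
    have h3' : w (Fin.natAdd k 0) < w (Fin.castAdd 2 i) + w (Fin.natAdd k 1) := h3
    rw [h1', h2'] at h3'
    exact h3'

include hlt hgrp in
lemma defin_halfbox' {k : ℕ} (i : Fin k) (c ε : M) :
    Defin L M {z : Fin k → M | z i < c + ε} := by
  have hdef : Defin L M ({w : Fin (k + 2) → M | w (Fin.natAdd k 0) = c}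
      ∩ ({w : Fin (k + 2) → M | w (Fin.natAdd k 1) = ε}
      ∩ {w : Fin (k + 2) → M | w (Fin.castAdd 2 i) < w (Fin.natAdd k 0) + w (Fin.natAdd k 1)})) :=
    (defin_eq_const _ c).inter ((defin_eq_const _ ε).inter (defin_lt_add hlt hgrp _ _ _))
  have him := hdef.image_comp (Fin.castAdd 2)
  unfold Defin
  convert him using 1
  ext z
  constructor
  · intro hz
    refine ⟨Fin.append z ![c, ε], ⟨?_, ?_, ?_⟩, ?_⟩
    · exact Fin.append_right _ _ 0
    · exact Fin.append_right _ _ 1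
    · show Fin.append z ![c, ε] (Fin.castAdd 2 i) < Fin.append z ![c, ε] (Fin.natAdd k 0)
        + Fin.append z ![c, ε] (Fin.natAdd k 1)
      rw [Fin.append_right, Fin.append_right, Fin.append_left]
      exact hz
    · exact funext fun j => Fin.append_left _ _ j
  · rintro ⟨w, ⟨h1, h2, h3⟩, rfl⟩
    show w (Fin.castAdd 2 i) < c + ε
    have h1' : w (Fin.natAdd k 0) = c := h1
    have h2' : w (Fin.natAdd k 1) = ε := h2
    have h3' : w (Fin.castAdd 2 i) < w (Fin.natAdd k 0) + w (Fin.natAdd k 1) := h3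
    rw [h1', h2'] at h3'
    exact h3'

include hlt hgrp in
lemma defin_box {k : ℕ} (a : Fin k → M) (ε : M) : Defin L M (Box a ε) := by
  have : Box a ε = ⋂ i ∈ (Finset.univ : Finset (Fin k)),
      ({z : Fin k → M | a i < z i + ε} ∩ {z : Fin k → M | z i < a i + ε}) := by
    ext z
    simp [Box, forall_and]
  rw [this]
  exact Set.definable_biInter_finset (fun i =>
    (defin_halfbox hlt hgrp i (a i) ε).inter (defin_halfbox' hlt hgrp i (a i) ε)) _

end Closure
end OMin15

namespace OMin15
variable {L : FirstOrder.Language} {M : Type} [L.Structure M]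

section Top
variable [AddCommGroup M] [LinearOrder M] [IsOrderedAddMonoid M] [TopologicalSpace M] [OrderTopology M]

lemma box_isOpen {k : ℕ} (a : Fin k → M) (ε : M) : IsOpen (Box a ε) := by
  have : Box a ε = ⋂ i, (fun z : Fin k → M => z i) ⁻¹' (Set.Ioo (a i - ε) (a i + ε)) := by
    ext z
    simp only [Box, mem_setOf_eq, mem_iInter, mem_preimage, mem_Ioo]
    refine forall_congr' fun i => and_congr ?_ Iff.rfl
    rw [sub_lt_iff_lt_add]
  rw [this]
  exact isOpen_iInter_of_finite fun i => (continuous_apply i).isOpen_preimage _ isOpen_Ioo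

lemma mem_box_self {k : ℕ} (a : Fin k → M) {ε : M} (hε : 0 < ε) : a ∈ Box a ε :=
  fun i => ⟨lt_add_of_pos_right _ hε, lt_add_of_pos_right _ hε⟩

lemma box_subset_nhds {u : M} (hu : (0 : M) < u) {k : ℕ} {U : Set (Fin k → M)}
    (hU : IsOpen U) {a : Fin k → M} (ha : a ∈ U) :
    ∃ ε : M, 0 < ε ∧ Box a ε ⊆ U := by
  obtain ⟨I, O, hO, hsub⟩ := isOpen_pi_iff.1 hU a ha
  have hOn : ∀ i ∈ I, ∃ ε : M, 0 < ε ∧ Set.Ioo (a i - ε) (a i + ε) ⊆ O i := by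
    intro i hi
    have hnhds : O i ∈ nhds (a i) := (hO i hi).1.mem_nhds (hO i hi).2
    obtain ⟨l, r, hmem, hsub'⟩ := (mem_nhds_iff_exists_Ioo_subset'
      ⟨a i - u, sub_lt_self _ hu⟩ ⟨a i + u, lt_add_of_pos_right _ hu⟩).1 hnhds
    refine ⟨min (a i - l) (r - a i), lt_min (by simpa using hmem.1) (by simpa using hmem.2), ?_⟩
    intro z hz
    refine hsub' ⟨?_, ?_⟩
    · calc l = a i - (a i - l) := (sub_sub_cancel _ _).symm
        _ ≤ a i - min (a i - l) (r - a i) := sub_le_sub_left (min_le_left _ _) _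
        _ < z := hz.1
    · calc z < a i + min (a i - l) (r - a i) := hz.2
        _ ≤ a i + (r - a i) := add_le_add_right (min_le_right _ _) _
        _ = r := by abel
  choose ε hε using hOn
  classical
  let S : Finset M := insert u (I.attach.image (fun i => ε i.1 i.2))
  have hSne : S.Nonempty := ⟨u, Finset.mem_insert_self _ _⟩
  refine ⟨S.min' hSne, ?_, ?_⟩
  · have := S.min'_mem hSne
    rcases Finset.mem_insert.1 this with h | h
    · rw [h]; exact hu
    · obtain ⟨i, _, hi⟩ := Finset.mem_image.1 h
      rw [← hi]; exact (hε i.1 i.2).1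
  · intro z hz
    apply hsub
    intro i hi
    have hle : S.min' hSne ≤ ε i hi :=
      Finset.min'_le _ _ (Finset.mem_insert_of_mem
        (Finset.mem_image.2 ⟨⟨i, hi⟩, I.mem_attach _, rfl⟩))
    apply (hε i hi).2
    constructor
    · have h1 : a i - S.min' hSne < z i := sub_lt_iff_lt_add.2 (hz i).1
      exact lt_of_le_of_lt (sub_le_sub_left hle _) h1
    · exact lt_of_lt_of_le (hz i).2 (add_le_add_right hle _)

lemma closure_eq_box {u : M} (hu : (0 : M) < u) {k : ℕ} (C : Set (Fin k → M)) :
    closure C = {x : Fin k → M | ∀ ε : M, 0 < ε → ∃ y ∈ C, ∀ i, x i < y i + ε ∧ y i < x i + ε} := by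
  ext x
  constructor
  · intro hx ε hε
    obtain ⟨y, hy⟩ := mem_closure_iff.1 hx (Box x ε) (box_isOpen x ε) (mem_box_self x hε)
    exact ⟨y, hy.2, fun i => hy.1 i⟩
  · intro hx
    rw [mem_closure_iff]
    intro o ho hxo
    obtain ⟨ε, hε, hbox⟩ := box_subset_nhds hu ho hxo
    obtain ⟨y, hyC, hy⟩ := hx ε hε
    exact ⟨y, hbox fun i => ⟨(hy i).1, (hy i).2⟩, hyC⟩

lemma all_eq_of_no_pos (hnp : ¬∃ u : M, (0 : M) < u) (m : M) : m = 0 := by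
  by_contra hm
  rcases lt_or_gt_of_ne hm with h | h
  · exact hnp ⟨-m, by simpa using h⟩
  · exact hnp ⟨m, h⟩

lemma set_cases_of_no_pos (hnp : ¬∃ u : M, (0 : M) < u) {k : ℕ} (s : Set (Fin k → M)) :
    s = ∅ ∨ s = Set.univ := by
  rcases Set.eq_empty_or_nonempty s with h | ⟨z, hz⟩
  · exact Or.inl h
  · right
    apply Set.eq_univ_of_forall
    intro w
    have : w = z := funext fun i => by
      rw [all_eq_of_no_pos hnp (w i), all_eq_of_no_pos hnp (z i)]
    rwa [this]

end Top
end OMin15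

namespace OMin15
variable {L : FirstOrder.Language} {M : Type} [L.Structure M]

section Closure2
variable [AddCommGroup M] [LinearOrder M] [IsOrderedAddMonoid M] [TopologicalSpace M] [OrderTopology M]

lemma defin_closure (hlt : Set.Definable (Set.univ : Set M) L {p : Fin 2 → M | p 0 < p 1})
    (hgrp : Set.Definable (Set.univ : Set M) L {p : Fin 3 → M | p 0 + p 1 = p 2})
    {k : ℕ} {C : Set (Fin k → M)} (hC : Defin L M C) :
    Defin L M (closure C) := by
  by_cases hex : ∃ u : M, 0 < u
  · obtain ⟨u, hu⟩ := hex
    rw [closure_eq_box hu]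
    set xi : Fin k → Fin ((k+1)+k) := fun i => Fin.castAdd k (Fin.castSucc i) with hxi
    set ei : Fin ((k+1)+k) := Fin.castAdd k (Fin.last k) with hei
    set yi : Fin k → Fin ((k+1)+k) := fun i => Fin.natAdd (k+1) i with hyi
    set Good : Set (Fin ((k+1)+k) → M) :=
      {w | w ∘ Fin.natAdd (k+1) ∈ C} ∩
        ⋂ i, ({w | w (xi i) < w (yi i) + w ei} ∩ {w | w (yi i) < w (xi i) + w ei}) with hGood
    have hGoodDef : Defin L M Good := by
      apply (hC.preimage_comp (Fin.natAdd (k+1))).inter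
      have : (⋂ i, ({w : Fin ((k+1)+k) → M | w (xi i) < w (yi i) + w ei}
          ∩ {w | w (yi i) < w (xi i) + w ei}))
          = ⋂ i ∈ (Finset.univ : Finset (Fin k)), ({w : Fin ((k+1)+k) → M | w (xi i) < w (yi i) + w ei}
          ∩ {w | w (yi i) < w (xi i) + w ei}) := by
        simp
      rw [this]
      exact Set.definable_biInter_finset (fun i =>
        (defin_lt_add hlt hgrp _ _ _).inter (defin_lt_add hlt hgrp _ _ _)) _
    set P : Set (Fin (k+1) → M) :=
      (fun w : Fin ((k+1)+k) → M => w ∘ (Fin.castAdd k : Fin (k+1) → Fin ((k+1)+k))) '' Good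
      with hP
    have hPDef : Defin L M P := hGoodDef.image_comp _
    have hPmem : ∀ v : Fin (k+1) → M, v ∈ P ↔ ∃ y ∈ C, ∀ i : Fin k,
        v (Fin.castSucc i) < y i + v (Fin.last k) ∧ y i < v (Fin.castSucc i) + v (Fin.last k) := by
      intro v
      constructor
      · rintro ⟨w, hw, rfl⟩
        obtain ⟨hw1, hw2⟩ := hw
        refine ⟨w ∘ Fin.natAdd (k+1), hw1, fun i => ?_⟩
        have := Set.mem_iInter.1 hw2 i
        exact this
      · rintro ⟨y, hyC, hy⟩
        refine ⟨Fin.append v y, ⟨?_, ?_⟩, ?_⟩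
        · show Fin.append v y ∘ Fin.natAdd (k+1) ∈ C
          have : Fin.append v y ∘ Fin.natAdd (k+1) = y := funext fun j => Fin.append_right _ _ j
          rw [this]; exact hyC
        · rw [Set.mem_iInter]
          intro i
          constructor
          · show Fin.append v y (xi i) < Fin.append v y (yi i) + Fin.append v y ei
            rw [hxi, hei, hyi]
            simp only [Fin.append_left, Fin.append_right]
            exact (hy i).1
          · show Fin.append v y (yi i) < Fin.append v y (xi i) + Fin.append v y ei
            rw [hxi, hei, hyi]
            simp only [Fin.append_left, Fin.append_right]
            exact (hy i).2
        · exact funext fun j => Fin.append_left _ _ j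
    set Neg : Set (Fin (k+1) → M) := {v | 0 < v (Fin.last k)} ∩ Pᶜ with hNeg
    have hNegDef : Defin L M Neg := (defin_pos hlt _).inter hPDef.compl
    set Bad : Set (Fin k → M) :=
      (fun v : Fin (k+1) → M => v ∘ (Fin.castSucc : Fin k → Fin (k+1))) '' Neg with hBad
    have hBadDef : Defin L M Bad := hNegDef.image_comp _
    have key : {x : Fin k → M | ∀ ε : M, 0 < ε →
        ∃ y ∈ C, ∀ i, x i < y i + ε ∧ y i < x i + ε} = Badᶜ := by
      ext x
      simp only [mem_setOf_eq, mem_compl_iff]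
      constructor
      · intro hx hxBad
        obtain ⟨v, ⟨hv1, hv2⟩, rfl⟩ := hxBad
        have hv1' : 0 < v (Fin.last k) := hv1
        apply hv2
        rw [hPmem]
        obtain ⟨y, hyC, hy⟩ := hx (v (Fin.last k)) hv1'
        exact ⟨y, hyC, hy⟩
      · intro hx ε hε
        by_contra hcon
        apply hx
        refine ⟨Fin.snoc x ε, ⟨?_, ?_⟩, ?_⟩
        · show 0 < (Fin.snoc x ε : Fin (k+1) → M) (Fin.last k)
          rw [Fin.snoc_last]; exact hε
        · intro hP'
          rw [hPmem] at hP'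
          obtain ⟨y, hyC, hy⟩ := hP'
          apply hcon
          refine ⟨y, hyC, fun i => ?_⟩
          have := hy i
          rwa [Fin.snoc_castSucc, Fin.snoc_last] at this
        · exact funext fun i => Fin.snoc_castSucc _ _ _
    rw [key]
    exact hBadDef.compl
  · rcases set_cases_of_no_pos hex C with rfl | rfl
    · rw [closure_empty]; exact Set.definable_empty
    · rw [closure_univ]; exact Set.definable_univ

lemma defin_interior (hlt : Set.Definable (Set.univ : Set M) L {p : Fin 2 → M | p 0 < p 1})
    (hgrp : Set.Definable (Set.univ : Set M) L {p : Fin 3 → M | p 0 + p 1 = p 2})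
    {k : ℕ} {C : Set (Fin k → M)} (hC : Defin L M C) :
    Defin L M (interior C) := by
  rw [← compl_compl (interior C), ← closure_compl]
  exact (defin_closure hlt hgrp hC.compl).compl

lemma nbhd_defin (hlt : Set.Definable (Set.univ : Set M) L {p : Fin 2 → M | p 0 < p 1})
    (hgrp : Set.Definable (Set.univ : Set M) L {p : Fin 3 → M | p 0 + p 1 = p 2})
    {k : ℕ} {U : Set (Fin k → M)} (hU : IsOpen U) {a : Fin k → M} (ha : a ∈ U) :
    ∃ Ub : Set (Fin k → M), IsOpen Ub ∧ Defin L M Ub ∧ a ∈ Ub ∧ Ub ⊆ U := by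
  by_cases hex : ∃ u : M, 0 < u
  · obtain ⟨u, hu⟩ := hex
    obtain ⟨ε, hε, hbox⟩ := box_subset_nhds hu hU ha
    exact ⟨Box a ε, box_isOpen a ε, defin_box hlt hgrp a ε, mem_box_self a hε, hbox⟩
  · refine ⟨Set.univ, isOpen_univ, Set.definable_univ, Set.mem_univ a, ?_⟩
    rcases set_cases_of_no_pos hex U with rfl | rfl
    · exact absurd ha (Set.notMem_empty a)
    · exact fun z _ => Set.mem_univ z

end Closure2
end OMin15

namespace OMin15
variable {L : FirstOrder.Language} {M : Type} [L.Structure M]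
variable {k : ℕ} {A : Set (Fin k → M)}

lemma OType.ext' {x y : OType L M A} (h : x.sets = y.sets) : x = y := by
  cases x; cases y; simpa using h

lemma mem_superset {x : OType L M A} {s t : Set (Fin k → M)} (hs : s ∈ x.sets)
    (hst : s ⊆ t) (htA : t ⊆ A) (htd : Defin L M t) : t ∈ x.sets := by
  rcases x.complete t htd htA with h | h
  · exact h
  · exfalso
    obtain ⟨p, hp⟩ := x.nonempty_mem _ (x.inter_mem s hs _ h)
    exact hp.2.2 (hst hp.1)

lemma not_mem_iff_diff_mem {x : OType L M A} {s : Set (Fin k → M)} (hsd : Defin L M s)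
    (hsA : s ⊆ A) : s ∉ x.sets ↔ A \ s ∈ x.sets := by
  constructor
  · intro hns
    rcases x.complete s hsd hsA with h | h
    · exact absurd h hns
    · exact h
  · intro hd hs
    obtain ⟨p, hp⟩ := x.nonempty_mem _ (x.inter_mem s hs _ hd)
    exact hp.2.2 hp.1

lemma otype_eq_of_sets_subset {x y : OType L M A} (h : x.sets ⊆ y.sets) : x = y := by
  apply OType.ext'
  apply Set.Subset.antisymm h
  intro s hs
  by_contra hns
  have hsd := y.definable_mem s hs
  have hsA := y.subset_mem s hs
  have : A \ s ∈ x.sets := ((not_mem_iff_diff_mem hsd hsA).1 hns)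
  have : A \ s ∈ y.sets := h this
  obtain ⟨p, hp⟩ := y.nonempty_mem _ (y.inter_mem s hs _ this)
  exact hp.2.2 hp.1

/-- principal type at a point -/
def princ (A : Set (Fin k → M)) (hA : Defin L M A) (b : Fin k → M) (hb : b ∈ A) :
    OType L M A where
  sets := {s | Defin L M s ∧ s ⊆ A ∧ b ∈ s}
  definable_mem := fun _ hs => hs.1
  subset_mem := fun _ hs => hs.2.1
  top_mem := ⟨hA, Set.Subset.refl A, hb⟩
  nonempty_mem := fun _ hs => ⟨b, hs.2.2⟩
  inter_mem := fun s hs t ht => ⟨hs.1.inter ht.1, fun p hp => hs.2.1 hp.1, hs.2.2, ht.2.2⟩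
  complete := fun s hsd hsA => by
    by_cases hbs : b ∈ s
    · exact Or.inl ⟨hsd, hsA, hbs⟩
    · exact Or.inr ⟨hA.sdiff hsd, Set.diff_subset, hb, hbs⟩

lemma mem_princ_iff {b : Fin k → M} {hA : Defin L M A} {hb : b ∈ A} {s : Set (Fin k → M)} :
    s ∈ (princ A hA b hb).sets ↔ Defin L M s ∧ s ⊆ A ∧ b ∈ s := Iff.rfl

end OMin15

namespace OMin15
variable {L : FirstOrder.Language} {M : Type} [L.Structure M]
variable {k : ℕ} {A : Set (Fin k → M)}

lemma finset_chain_sub {α : Type} {c : Set (Set (Set α))} (hc : IsChain (· ⊆ ·) c)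
    (hne : c.Nonempty) (T : Finset (Set α)) (hT : ↑T ⊆ ⋃₀ c) : ∃ g ∈ c, ↑T ⊆ g := by
  classical
  induction T using Finset.induction_on with
  | empty => exact ⟨hne.some, hne.some_mem, by simp⟩
  | insert _ _ hnotmem ih =>
    rename_i a T'
    have hT' : ↑T' ⊆ ⋃₀ c := fun s hs => hT (by simp [hs])
    obtain ⟨g, hg, hTg⟩ := ih hT'
    obtain ⟨g', hg', hag'⟩ := hT (Finset.mem_coe.2 (Finset.mem_insert_self a T'))
    rcases hc.total hg hg' with hgg | hgg
    · exact ⟨g', hg', by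
        rw [Finset.coe_insert]
        exact Set.insert_subset hag' (hTg.trans hgg)⟩
    · exact ⟨g, hg, by
        rw [Finset.coe_insert]
        exact Set.insert_subset (hgg hag') hTg⟩

/-- Extension of a finitely-satisfiable family of definable subsets of `A` to a complete type. -/
lemma exists_otype_extend (hA : Defin L M A) (S : Set (Set (Fin k → M)))
    (hdef : ∀ s ∈ S, Defin L M s) (hsub : ∀ s ∈ S, s ⊆ A)
    (hfip : ∀ T : Finset (Set (Fin k → M)), ↑T ⊆ S → (A ∩ ⋂₀ ↑T).Nonempty) :
    ∃ x : OType L M A, S ⊆ x.sets := by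
  classical
  set 𝒞 : Set (Set (Set (Fin k → M))) :=
    {G | S ⊆ G ∧ (∀ s ∈ G, Defin L M s ∧ s ⊆ A) ∧
      ∀ T : Finset (Set (Fin k → M)), ↑T ⊆ G → (A ∩ ⋂₀ ↑T).Nonempty} with h𝒞
  have hS𝒞 : S ∈ 𝒞 := ⟨Set.Subset.refl S, fun s hs => ⟨hdef s hs, hsub s hs⟩, hfip⟩
  obtain ⟨G, hSG, hGmax⟩ := zorn_subset_nonempty 𝒞 (fun c hc hchain hcne => by
    refine ⟨⋃₀ c, ⟨?_, ?_, ?_⟩, fun s hs => Set.subset_sUnion_of_mem hs⟩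
    · exact (hc hcne.some_mem).1.trans (Set.subset_sUnion_of_mem hcne.some_mem)
    · rintro s ⟨g, hg, hsg⟩
      exact (hc hg).2.1 s hsg
    · intro T hT
      obtain ⟨g, hg, hTg⟩ := finset_chain_sub hchain hcne T hT
      exact (hc hg).2.2 T hTg) S hS𝒞
  obtain ⟨hSG', hGdefsub, hGfip⟩ := hGmax.1
  -- maximality principle
  have hmax : ∀ s : Set (Fin k → M), Defin L M s → s ⊆ A →
      (∀ T : Finset (Set (Fin k → M)), ↑T ⊆ G → (A ∩ (s ∩ ⋂₀ ↑T)).Nonempty) → s ∈ G := by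
    intro s hsd hsA hsfip
    have : insert s G ∈ 𝒞 := by
      refine ⟨hSG'.trans (Set.subset_insert _ _), ?_, ?_⟩
      · rintro t ht
        rcases Set.mem_insert_iff.1 ht with rfl | ht
        · exact ⟨hsd, hsA⟩
        · exact hGdefsub t ht
      · intro T hT
        have hT' : ↑(T.erase s) ⊆ G := by
          intro t ht
          rcases Set.mem_insert_iff.1 (hT (Finset.erase_subset _ _ ht)) with rfl | h
          · exact absurd ht (by simp)
          · exact h
        obtain ⟨p, hp⟩ := hsfip (T.erase s) hT'
        refine ⟨p, hp.1, ?_⟩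
        intro t ht
        by_cases hts : t = s
        · exact hts ▸ hp.2.1
        · exact hp.2.2 t (by
            rw [Finset.coe_erase]
            exact ⟨ht, hts⟩)
    exact hGmax.2 this (Set.subset_insert _ _) (Set.mem_insert _ _)
  refine ⟨⟨G, fun s hs => (hGdefsub s hs).1, fun s hs => (hGdefsub s hs).2, ?_, ?_, ?_, ?_⟩,
    hSG⟩
  · -- top_mem
    apply hmax A hA (Set.Subset.refl A)
    intro T hT
    obtain ⟨p, hp⟩ := hGfip T hT
    exact ⟨p, hp.1, hp.1, hp.2⟩
  · -- nonempty_mem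
    intro s hs
    have := hGfip {s} (by simpa using hs)
    obtain ⟨p, hp⟩ := this
    exact ⟨p, by
      have := hp.2
      simp only [Finset.coe_singleton, Set.sInter_singleton] at this
      exact this⟩
  · -- inter_mem
    intro s hs t ht
    apply hmax (s ∩ t) ((hGdefsub s hs).1.inter (hGdefsub t ht).1)
      (fun p hp => (hGdefsub s hs).2 hp.1)
    intro T hT
    have hT' : ↑(insert s (insert t T)) ⊆ G := by
      intro r hr
      rcases Finset.mem_coe.1 hr |> Finset.mem_insert.1 with rfl | hr'
      · exact hs
      · rcases Finset.mem_insert.1 hr' with rfl | hr''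
        · exact ht
        · exact hT hr''
    obtain ⟨p, hp1, hp2⟩ := hGfip _ hT'
    refine ⟨p, hp1, ⟨?_, ?_⟩, ?_⟩
    · exact hp2 s (by simp)
    · exact hp2 t (by simp)
    · intro r hr
      exact hp2 r (by simp [hr])
  · -- complete
    intro s hsd hsA
    by_contra hcon
    push_neg at hcon
    obtain ⟨hns, hnd⟩ := hcon
    have h1 : ¬ ∀ T : Finset (Set (Fin k → M)), ↑T ⊆ G → (A ∩ (s ∩ ⋂₀ ↑T)).Nonempty :=
      fun hh => hns (hmax s hsd hsA hh)
    have h2 : ¬ ∀ T : Finset (Set (Fin k → M)), ↑T ⊆ G → (A ∩ ((A \ s) ∩ ⋂₀ ↑T)).Nonempty :=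
      fun hh => hnd (hmax (A \ s) (hA.sdiff hsd) Set.diff_subset hh)
    push_neg at h1 h2
    obtain ⟨T₁, hT₁, he₁⟩ := h1
    obtain ⟨T₂, hT₂, he₂⟩ := h2
    have hTu : ↑(T₁ ∪ T₂) ⊆ G := by
      intro t ht
      rcases Finset.mem_coe.1 ht |> Finset.mem_union.1 with h | h
      · exact hT₁ h
      · exact hT₂ h
    obtain ⟨p, hpA, hpT⟩ := hGfip _ hTu
    by_cases hps : p ∈ s
    · apply Set.not_nonempty_empty
      rw [← he₁]
      exact ⟨p, hpA, hps, fun t ht => hpT t (by simp [ht])⟩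
    · apply Set.not_nonempty_empty
      rw [← he₂]
      exact ⟨p, hpA, ⟨hpA, hps⟩, fun t ht => hpT t (by simp [ht])⟩

end OMin15

namespace OMin15
variable {L : FirstOrder.Language} {M : Type} [L.Structure M]

section Spec
variable [TopologicalSpace M] {k : ℕ} {A : Set (Fin k → M)}

lemma spo_isOpen {U : Set (Fin k → M)} (hU : IsOpen U) (hUd : Defin L M U) :
    IsOpen {x : OType L M A | U ∩ A ∈ x.sets} :=
  TopologicalSpace.GenerateOpen.basic _ ⟨U, hU, hUd, rfl⟩

lemma spo_basis (hA : Defin L M A) {W : Set (OType L M A)} (hW : IsOpen W) :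
    ∀ x ∈ W, ∃ U : Set (Fin k → M), IsOpen U ∧ Defin L M U ∧ (U ∩ A ∈ x.sets) ∧
      {y : OType L M A | U ∩ A ∈ y.sets} ⊆ W := by
  have hW' : TopologicalSpace.GenerateOpen
      {V | ∃ U : Set (Fin k → M), IsOpen U ∧ Defin L M U ∧
        V = {x : OType L M A | U ∩ A ∈ x.sets}} W := hW
  clear hW
  induction hW' with
  | basic V hV =>
    obtain ⟨U, hU, hUd, rfl⟩ := hV
    exact fun x hx => ⟨U, hU, hUd, hx, fun y hy => hy⟩
  | univ =>
    intro x _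
    refine ⟨Set.univ, isOpen_univ, Set.definable_univ, ?_, fun y _ => trivial⟩
    rw [Set.univ_inter]
    exact x.top_mem
  | inter W₁ W₂ h₁ h₂ ih₁ ih₂ =>
    intro x hx
    obtain ⟨U₁, hU₁, hU₁d, hx₁, hsub₁⟩ := ih₁ x hx.1
    obtain ⟨U₂, hU₂, hU₂d, hx₂, hsub₂⟩ := ih₂ x hx.2
    refine ⟨U₁ ∩ U₂, hU₁.inter hU₂, hU₁d.inter hU₂d, ?_, ?_⟩
    · have := x.inter_mem _ hx₁ _ hx₂
      have he : (U₁ ∩ A) ∩ (U₂ ∩ A) = (U₁ ∩ U₂) ∩ A := by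
        ext p; constructor
        · rintro ⟨⟨h1, h2⟩, h3, _⟩; exact ⟨⟨h1, h3⟩, h2⟩
        · rintro ⟨⟨h1, h3⟩, h2⟩; exact ⟨⟨h1, h2⟩, h3, h2⟩
      rwa [he] at this
    · intro y hy
      have hy' : (U₁ ∩ U₂) ∩ A ∈ y.sets := hy
      constructor
      · exact hsub₁ (mem_superset hy' (fun p hp => ⟨hp.1.1, hp.2⟩)
          (fun p hp => hp.2) (hU₁d.inter hA))
      · exact hsub₂ (mem_superset hy' (fun p hp => ⟨hp.1.2, hp.2⟩)
          (fun p hp => hp.2) (hU₂d.inter hA))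
  | sUnion 𝒯 h𝒯 ih =>
    intro x hx
    obtain ⟨t, ht, hxt⟩ := hx
    obtain ⟨U, hU, hUd, hxU, hsub⟩ := ih t ht x hxt
    exact ⟨U, hU, hUd, hxU, fun y hy => ⟨t, ht, hsub hy⟩⟩

end Spec
end OMin15

namespace OMin15
variable {L : FirstOrder.Language} {M : Type} [L.Structure M]
variable {k : ℕ} {A : Set (Fin k → M)}

lemma defin_finset_sInter (hA : Defin L M A) (T : Finset (Set (Fin k → M)))
    (hT : ∀ t ∈ T, Defin L M t) : Defin L M (A ∩ ⋂₀ ↑T) := by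
  classical
  induction T using Finset.induction_on with
  | empty => simpa using hA
  | insert _ _ hnm ih =>
    rename_i s T₀
    have he : A ∩ ⋂₀ ↑(insert s T₀) = (A ∩ ⋂₀ ↑T₀) ∩ s := by
      rw [Finset.coe_insert, Set.sInter_insert]
      ext p; exact ⟨fun ⟨h1, h2, h3⟩ => ⟨⟨h1, h3⟩, h2⟩, fun ⟨⟨h1, h3⟩, h2⟩ => ⟨h1, h2, h3⟩⟩
    rw [he]
    exact (ih (fun t ht => hT t (Finset.mem_insert_of_mem ht))).inter
      (hT s (Finset.mem_insert_self _ _))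

lemma mem_finset_sInter (x : OType L M A) (T : Finset (Set (Fin k → M)))
    (hT : ∀ t ∈ T, t ∈ x.sets) : A ∩ ⋂₀ ↑T ∈ x.sets := by
  classical
  induction T using Finset.induction_on with
  | empty => simpa using x.top_mem
  | insert _ _ hnm ih =>
    rename_i s T₀
    have he : A ∩ ⋂₀ ↑(insert s T₀) = (A ∩ ⋂₀ ↑T₀) ∩ s := by
      rw [Finset.coe_insert, Set.sInter_insert]
      ext p; exact ⟨fun ⟨h1, h2, h3⟩ => ⟨⟨h1, h3⟩, h2⟩, fun ⟨⟨h1, h3⟩, h2⟩ => ⟨h1, h2, h3⟩⟩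
    rw [he]
    exact x.inter_mem _ (ih (fun t ht => hT t (Finset.mem_insert_of_mem ht))) _
      (hT s (Finset.mem_insert_self _ _))

section ClosedSpec
variable [AddCommGroup M] [LinearOrder M] [IsOrderedAddMonoid M] [TopologicalSpace M] [OrderTopology M]

lemma spd_isClosed (hlt : Set.Definable (Set.univ : Set M) L {p : Fin 2 → M | p 0 < p 1})
    (hgrp : Set.Definable (Set.univ : Set M) L {p : Fin 3 → M | p 0 + p 1 = p 2})
    (hA : Defin L M A) {s : Set (Fin k → M)} (hsd : Defin L M s) (hsA : s ⊆ A)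
    (hscl : closure s ∩ A ⊆ s) : IsClosed {x : OType L M A | s ∈ x.sets} := by
  rw [← isOpen_compl_iff]
  have hds : A \ s = (closure s)ᶜ ∩ A := by
    ext p
    constructor
    · rintro ⟨hpA, hps⟩
      exact ⟨fun hc => hps (hscl ⟨hc, hpA⟩), hpA⟩
    · rintro ⟨hpc, hpA⟩
      exact ⟨hpA, fun hps => hpc (subset_closure hps)⟩
  have : {x : OType L M A | s ∈ x.sets}ᶜ = {x : OType L M A | (closure s)ᶜ ∩ A ∈ x.sets} := by
    ext x
    simp only [Set.mem_compl_iff, Set.mem_setOf_eq]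
    rw [not_mem_iff_diff_mem hsd hsA, hds]
  rw [this]
  exact spo_isOpen (isOpen_compl_iff.2 isClosed_closure) (defin_closure hlt hgrp hsd).compl

end ClosedSpec
end OMin15


/-- Let `f : A → B` be a definable map between definable sets in an o-minimal structure
(expanding an ordered group), and `Sp f : Sp A → Sp B` the induced map. Then `f` is an open
map iff `Sp f` is open, and `f` is definably closed (images of definable relatively closed
sets are relatively closed) iff `Sp f` is a closed map. -/
theorem stmt15 {L : FirstOrder.Language} {M : Type} [L.Structure M]
    [AddCommGroup M] [LinearOrder M] [IsOrderedAddMonoid M] [TopologicalSpace M] [OrderTopology M]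
    (hmin : IsOMin L M) (hgrp : ExpandsGroup L M)
    {k h : ℕ} (A : Set (Fin k → M)) (B : Set (Fin h → M))
    (hA : Defin L M A) (hB : Defin L M B)
    (f : (Fin k → M) → (Fin h → M))
    (hfdef : Defin L M
      {p : Fin (k + h) → M |
        f (fun i => p (Fin.castAdd h i)) = fun j => p (Fin.natAdd k j)})
    (hmap : Set.MapsTo f A B)
    (F : OType L M A → OType L M B) (hF : IsSpecMap L M A B f F) :
    ((∀ U : Set (Fin k → M), IsOpen U →
        ∃ V : Set (Fin h → M), IsOpen V ∧ f '' (U ∩ A) = V ∩ B) ↔ IsOpenMap F) ∧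
    ((∀ C : Set (Fin k → M), Defin L M C → C ⊆ A → closure C ∩ A ⊆ C →
        closure (f '' C) ∩ B ⊆ f '' C) ↔ IsClosedMap F) := by
  classical
  have hlt : Set.Definable (Set.univ : Set M) L {p : Fin 2 → M | p 0 < p 1} := hmin.1
  have hgrp' : Set.Definable (Set.univ : Set M) L {p : Fin 3 → M | p 0 + p 1 = p 2} := hgrp
  have hfim : ∀ {C : Set (Fin k → M)}, Defin L M C → Defin L M (f '' C) :=
    fun hC => OMin15.defin_image hfdef hC
  have hfpre : ∀ {t : Set (Fin h → M)}, Defin L M t → Defin L M (f ⁻¹' t) :=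
    fun ht => OMin15.defin_preimage hfdef ht
  have himsubB : ∀ {C : Set (Fin k → M)}, C ⊆ A → f '' C ⊆ B := by
    rintro C hCA q ⟨p, hp, rfl⟩
    exact hmap (hCA hp)
  have hpush : ∀ (x : OType L M A) (C : Set (Fin k → M)), C ∈ x.sets → f '' C ∈ (F x).sets := by
    intro x C hC
    have hCd := x.definable_mem C hC
    have hCA := x.subset_mem C hC
    rw [hF]
    refine ⟨hfim hCd, himsubB hCA, ?_⟩
    exact OMin15.mem_superset hC (fun p hp => ⟨hCA hp, Set.mem_image_of_mem f hp⟩)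
      Set.inter_subset_left (hA.inter (hfpre (hfim hCd)))
  -- the lifting lemma
  have hlift : ∀ (𝒟 : Set (Set (Fin k → M))), (∀ s ∈ 𝒟, Defin L M s) → (∀ s ∈ 𝒟, s ⊆ A) →
      ∀ y : OType L M B,
      (∀ T : Finset (Set (Fin k → M)), ↑T ⊆ 𝒟 → f '' (A ∩ ⋂₀ ↑T) ∈ y.sets) →
      ∃ x : OType L M A, 𝒟 ⊆ x.sets ∧ F x = y := by
    intro 𝒟 h𝒟d h𝒟A y hy
    set S : Set (Set (Fin k → M)) := 𝒟 ∪ {s | ∃ t ∈ y.sets, s = A ∩ f ⁻¹' t} with hS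
    have claim : ∀ T : Finset (Set (Fin k → M)), ↑T ⊆ S →
        ∃ (T' : Finset (Set (Fin k → M))) (t : Set (Fin h → M)), ↑T' ⊆ 𝒟 ∧ t ∈ y.sets ∧
          (A ∩ ⋂₀ ↑T') ∩ f ⁻¹' t ⊆ A ∩ ⋂₀ ↑T := by
      intro T
      induction T using Finset.induction_on with
      | empty =>
        intro _
        refine ⟨∅, B, by simp, y.top_mem, ?_⟩
        rintro p ⟨⟨hpA, _⟩, _⟩
        exact ⟨hpA, by simp⟩
      | insert _ _ hnm ih =>
        rename_i s T₀
        intro hT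
        have hT₀ : ↑T₀ ⊆ S := fun t ht =>
          hT (Finset.mem_coe.2 (Finset.mem_insert_of_mem (Finset.mem_coe.1 ht)))
        obtain ⟨T', t, hT'𝒟, hty, hsub⟩ := ih hT₀
        have hsS : s ∈ S := hT (Finset.mem_coe.2 (Finset.mem_insert_self _ _))
        rcases hsS with hs𝒟 | ⟨t₀, ht₀, rfl⟩
        · refine ⟨insert s T', t, ?_, hty, ?_⟩
          · rw [Finset.coe_insert]
            exact Set.insert_subset hs𝒟 hT'𝒟
          · rintro p ⟨⟨hpA, hpI⟩, hpt⟩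
            have hpT' : p ∈ ⋂₀ (↑T' : Set (Set (Fin k → M))) := fun r hr =>
              hpI r (by rw [Finset.coe_insert]; exact Set.mem_insert_iff.2 (Or.inr hr))
            have hmain := hsub ⟨⟨hpA, hpT'⟩, hpt⟩
            refine ⟨hpA, ?_⟩
            intro r hr
            rcases Finset.mem_insert.1 (Finset.mem_coe.1 hr) with rfl | hr₀
            · exact hpI r (by rw [Finset.coe_insert]; exact Set.mem_insert _ _)
            · exact hmain.2 r (Finset.mem_coe.2 hr₀)
        · refine ⟨T', t ∩ t₀, hT'𝒟, y.inter_mem _ hty _ ht₀, ?_⟩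
          rintro p ⟨⟨hpA, hpT'⟩, hpt⟩
          have hmain := hsub ⟨⟨hpA, hpT'⟩, hpt.1⟩
          refine ⟨hpA, ?_⟩
          intro r hr
          rcases Finset.mem_insert.1 (Finset.mem_coe.1 hr) with rfl | hr₀
          · exact ⟨hpA, hpt.2⟩
          · exact hmain.2 r (Finset.mem_coe.2 hr₀)
    obtain ⟨x, hxS⟩ := OMin15.exists_otype_extend hA S
      (by
        rintro s (hs | ⟨t, ht, rfl⟩)
        · exact h𝒟d s hs
        · exact hA.inter (hfpre (y.definable_mem t ht)))
      (by
        rintro s (hs | ⟨t, ht, rfl⟩)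
        · exact h𝒟A s hs
        · exact Set.inter_subset_left)
      (by
        intro T hT
        obtain ⟨T', t, hT'𝒟, hty, hsub⟩ := claim T hT
        have h1 : f '' (A ∩ ⋂₀ ↑T') ∈ y.sets := hy T' hT'𝒟
        obtain ⟨q, hq1, hq2⟩ := y.nonempty_mem _ (y.inter_mem _ h1 _ hty)
        obtain ⟨p, hp, rfl⟩ := hq1
        exact ⟨p, (hsub ⟨hp, hq2⟩).1, (hsub ⟨hp, hq2⟩).2⟩)
    refine ⟨x, fun s hs => hxS (Or.inl hs), ?_⟩
    symm
    apply OMin15.otype_eq_of_sets_subset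
    intro t ht
    rw [hF]
    exact ⟨y.definable_mem t ht, y.subset_mem t ht, hxS (Or.inr ⟨t, ht, rfl⟩)⟩
  -- lifting for a single definable set
  have hspf : ∀ (s : Set (Fin k → M)), Defin L M s → s ⊆ A →
      {y : OType L M B | f '' s ∈ y.sets} ⊆ F '' {x : OType L M A | s ∈ x.sets} := by
    intro s hsd hsA y hy
    have hfip : ∀ T : Finset (Set (Fin k → M)), ↑T ⊆ ({s} : Set (Set (Fin k → M))) →
        f '' (A ∩ ⋂₀ ↑T) ∈ y.sets := by
      intro T hT
      have hT' : T ⊆ ({s} : Finset (Set (Fin k → M))) := by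
        intro r hr
        have := hT (Finset.mem_coe.2 hr)
        simpa using this
      rcases Finset.subset_singleton_iff.1 hT' with rfl | rfl
      · have he : A ∩ ⋂₀ (↑(∅ : Finset (Set (Fin k → M))) : Set (Set (Fin k → M))) = A := by
          simp
        rw [he]
        exact OMin15.mem_superset hy (Set.image_mono (f := f) hsA) (himsubB (Set.Subset.refl A))
          (hfim hA)
      · have he : A ∩ ⋂₀ (↑({s} : Finset (Set (Fin k → M))) : Set (Set (Fin k → M))) = s := by
          simp [Set.inter_eq_self_of_subset_right hsA]
        rw [he]
        exact hy
    obtain ⟨x, hxs, hxF⟩ := hlift {s} (by simpa using hsd) (by simpa using hsA) y hfip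
    exact ⟨x, hxs rfl, hxF⟩
  have hFprinc : ∀ (a : Fin k → M) (ha : a ∈ A),
      F (OMin15.princ A hA a ha) = OMin15.princ B hB (f a) (hmap ha) := by
    intro a ha
    symm
    apply OMin15.otype_eq_of_sets_subset
    rintro t ⟨htd, htB, hft⟩
    rw [hF]
    exact ⟨htd, htB, ⟨hA.inter (hfpre htd), Set.inter_subset_left, ha, hft⟩⟩
  constructor
  · -- open part
    constructor
    · intro hopen W hW
      rw [isOpen_iff_forall_mem_open]
      rintro z ⟨x, hxW, rfl⟩
      obtain ⟨U, hUo, hUd, hxU, hUsub⟩ := OMin15.spo_basis hA hW x hxW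
      obtain ⟨V, hVo, hVeq⟩ := hopen U hUo
      set V' : Set (Fin h → M) := interior (f '' (U ∩ A) ∪ Bᶜ) with hV'
      have hV'd : Defin L M V' :=
        OMin15.defin_interior hlt hgrp' ((hfim (hUd.inter hA)).union hB.compl)
      have hV'o : IsOpen V' := isOpen_interior
      have hVsubV' : V ⊆ V' := by
        apply interior_maximal _ hVo
        intro q hq
        by_cases hqB : q ∈ B
        · exact Or.inl (hVeq ▸ ⟨hq, hqB⟩)
        · exact Or.inr hqB
      have hV'B : V' ∩ B = f '' (U ∩ A) := by
        apply Set.Subset.antisymm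
        · rintro q ⟨hqV', hqB⟩
          rcases interior_subset hqV' with hq | hq
          · exact hq
          · exact absurd hqB hq
        · intro q hq
          have hq' : q ∈ V ∩ B := hVeq ▸ hq
          exact ⟨hVsubV' hq'.1, hq'.2⟩
      refine ⟨{y : OType L M B | V' ∩ B ∈ y.sets}, ?_, OMin15.spo_isOpen hV'o hV'd, ?_⟩
      · intro y hy
        have : y ∈ {y : OType L M B | f '' (U ∩ A) ∈ y.sets} := by
          show f '' (U ∩ A) ∈ y.sets
          rwa [← hV'B]
        obtain ⟨x', hx', rfl⟩ := hspf (U ∩ A) (hUd.inter hA) Set.inter_subset_right this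
        exact Set.mem_image_of_mem F (hUsub hx')
      · show V' ∩ B ∈ (F x).sets
        rw [hV'B]
        exact hpush x (U ∩ A) hxU
    · intro hFopen U hUo
      refine ⟨⋃₀ {W | IsOpen W ∧ W ∩ B ⊆ f '' (U ∩ A)}, isOpen_sUnion (fun W hW => hW.1), ?_⟩
      apply Set.Subset.antisymm
      · rintro q ⟨a, ⟨haU, haA⟩, rfl⟩
        obtain ⟨Ub, hUbo, hUbd, haUb, hUbsub⟩ := OMin15.nbhd_defin hlt hgrp' hUo haU
        have hspoUb : IsOpen (F '' {x : OType L M A | Ub ∩ A ∈ x.sets}) :=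
          hFopen _ (OMin15.spo_isOpen hUbo hUbd)
        have hprinca : OMin15.princ A hA a haA ∈ {x : OType L M A | Ub ∩ A ∈ x.sets} :=
          ⟨hUbd.inter hA, Set.inter_subset_right, haUb, haA⟩
        obtain ⟨W, hWo, hWd, hWmem, hWsub⟩ := OMin15.spo_basis hB hspoUb _
          (Set.mem_image_of_mem F hprinca)
        rw [hFprinc a haA] at hWmem
        obtain ⟨hWBd, hWBB, hfaW⟩ := hWmem
        have hWB : W ∩ B ⊆ f '' (Ub ∩ A) := by
          intro b hb
          have hprincb : OMin15.princ B hB b hb.2 ∈ {y : OType L M B | W ∩ B ∈ y.sets} :=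
            ⟨hWBd, hWBB, hb⟩
          obtain ⟨x, hxUb, hxF⟩ := hWsub hprincb
          by_contra hbf
          have hdiff : B \ f '' (Ub ∩ A) ∈ (OMin15.princ B hB b hb.2).sets :=
            ⟨hB.sdiff (hfim (hUbd.inter hA)), Set.diff_subset, hb.2, hbf⟩
          rw [← hxF, hF] at hdiff
          obtain ⟨p, hp⟩ := x.nonempty_mem _ (x.inter_mem _ hxUb _ hdiff.2.2)
          exact hp.2.2.2 (Set.mem_image_of_mem f hp.1)
        have hWsub' : W ∩ B ⊆ f '' (U ∩ A) :=
          hWB.trans (Set.image_mono (f := f) (fun p hp => ⟨hUbsub hp.1, hp.2⟩))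
        exact ⟨⟨W, ⟨hWo, hWsub'⟩, hfaW.1⟩, hmap haA⟩
      · rintro q ⟨hqV, hqB⟩
        obtain ⟨W, hWmem', hqW⟩ := hqV
        exact hWmem'.2 ⟨hqW, hqB⟩
  · -- closed part
    constructor
    · intro hfc Z hZ
      set I : Set (Set (Fin k → M)) :=
        {U | IsOpen U ∧ Defin L M U ∧ {x : OType L M A | U ∩ A ∈ x.sets} ⊆ Zᶜ} with hI
      set 𝒟 : Set (Set (Fin k → M)) := (fun U => A \ U) '' I with h𝒟
      have h𝒟d : ∀ s ∈ 𝒟, Defin L M s := by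
        rintro s ⟨U, hU, rfl⟩
        exact hA.sdiff hU.2.1
      have h𝒟A : ∀ s ∈ 𝒟, s ⊆ A := by
        rintro s ⟨U, hU, rfl⟩
        exact Set.diff_subset
      have hmemZ : ∀ x : OType L M A, x ∈ Z ↔ 𝒟 ⊆ x.sets := by
        intro x
        constructor
        · rintro hxZ s ⟨U, hU, rfl⟩
          have hnot : U ∩ A ∉ x.sets := fun hc => hU.2.2 hc hxZ
          have := (OMin15.not_mem_iff_diff_mem (hU.2.1.inter hA) Set.inter_subset_right).1 hnot
          rwa [Set.diff_inter_self_eq_diff] at this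
        · intro hsub
          by_contra hxZ
          obtain ⟨U, hUo, hUd, hxU, hUsub⟩ :=
            OMin15.spo_basis hA hZ.isOpen_compl x hxZ
          have hUI : U ∈ I := ⟨hUo, hUd, hUsub⟩
          have hdiff : A \ U ∈ x.sets := hsub ⟨U, hUI, rfl⟩
          obtain ⟨p, hp⟩ := x.nonempty_mem _ (x.inter_mem _ hxU _ hdiff)
          exact hp.2.2 hp.1.1
      have hFZ : F '' Z = ⋂ (T : Finset (Set (Fin k → M))) (_ : ↑T ⊆ 𝒟),
          {y : OType L M B | f '' (A ∩ ⋂₀ ↑T) ∈ y.sets} := by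
        apply Set.Subset.antisymm
        · rintro z ⟨x, hxZ, rfl⟩
          rw [Set.mem_iInter₂]
          intro T hT
          exact hpush x _ (OMin15.mem_finset_sInter x T (fun t ht =>
            ((hmemZ x).1 hxZ) (hT (Finset.mem_coe.2 ht))))
        · intro y hy
          rw [Set.mem_iInter₂] at hy
          obtain ⟨x, hx𝒟, hxF⟩ := hlift 𝒟 h𝒟d h𝒟A y hy
          exact ⟨x, (hmemZ x).2 hx𝒟, hxF⟩
      rw [hFZ]
      apply isClosed_iInter
      intro T
      apply isClosed_iInter
      intro hT
      have hTd : ∀ t ∈ T, Defin L M t := fun t ht => h𝒟d t (hT (Finset.mem_coe.2 ht))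
      have hCTd : Defin L M (A ∩ ⋂₀ ↑T) := OMin15.defin_finset_sInter hA T hTd
      have hCTA : (A ∩ ⋂₀ (↑T : Set (Set (Fin k → M)))) ⊆ A := Set.inter_subset_left
      have hCTcl : closure (A ∩ ⋂₀ (↑T : Set (Set (Fin k → M)))) ∩ A ⊆
          A ∩ ⋂₀ (↑T : Set (Set (Fin k → M))) := by
        rintro p ⟨hpcl, hpA⟩
        refine ⟨hpA, ?_⟩
        intro t ht
        obtain ⟨U, hUI, rfl⟩ := hT ht
        have hsubc : (A ∩ ⋂₀ (↑T : Set (Set (Fin k → M)))) ⊆ Uᶜ := by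
          intro r hr
          exact (hr.2 _ ht).2
        have hcls : closure (A ∩ ⋂₀ (↑T : Set (Set (Fin k → M)))) ⊆ Uᶜ :=
          closure_minimal hsubc hUI.1.isClosed_compl
        exact ⟨hpA, hcls hpcl⟩
      have hrel := hfc _ hCTd hCTA hCTcl
      exact OMin15.spd_isClosed hlt hgrp' hB (hfim hCTd) (himsubB hCTA) hrel
    · intro hFclosed C hCd hCA hCcl
      have hZ : IsClosed {x : OType L M A | C ∈ x.sets} :=
        OMin15.spd_isClosed hlt hgrp' hA hCd hCA hCcl
      have hFC : F '' {x : OType L M A | C ∈ x.sets} = {y : OType L M B | f '' C ∈ y.sets} := by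
        apply Set.Subset.antisymm
        · rintro z ⟨x, hx, rfl⟩
          exact hpush x C hx
        · exact hspf C hCd hCA
      have hclosed : IsClosed {y : OType L M B | f '' C ∈ y.sets} := hFC ▸ hFclosed _ hZ
      rintro b ⟨hbcl, hbB⟩
      by_contra hbf
      have hprincb : OMin15.princ B hB b hbB ∈ {y : OType L M B | f '' C ∈ y.sets}ᶜ := by
        intro hc
        exact hbf hc.2.2
      obtain ⟨W, hWo, hWd, hWmem, hWsub⟩ :=
        OMin15.spo_basis hB hclosed.isOpen_compl _ hprincb
      have hWC : W ∩ f '' C = ∅ := by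
        by_contra hne
        obtain ⟨q, hqW, hqC⟩ := Set.nonempty_iff_ne_empty.2 hne
        have hqB : q ∈ B := himsubB hCA hqC
        have hq : OMin15.princ B hB q hqB ∈ {y : OType L M B | W ∩ B ∈ y.sets} :=
          ⟨hWd.inter hB, Set.inter_subset_right, hqW, hqB⟩
        exact hWsub hq ⟨hfim hCd, himsubB hCA, hqC⟩
      obtain ⟨q, hq⟩ := mem_closure_iff.1 hbcl W hWo hWmem.2.2.1
      rw [Set.eq_empty_iff_forall_notMem] at hWC
      exact hWC q hq
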